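/- Let h₀ ∈ (0,1), let η : ℝ → ℝ be bounded and Lipschitz (with Lipschitz constant L) such that 1 + inf η > h₀, and let K : ℝ → ℝ be a Schwartz function with ∫ K(s) ds = 1. For δ > 0 define η^δ(x, y′) = ∫ K(s)·η(x − δ(1 − y′)s) ds and F^δ(x, y′) = (x, y′(1 + η^δ(x, y′))). Then there exists δ_max > 0, depending only on K, h₀ and L, such that for every δ ∈ (0, δ_max): (i) for each fixed x the map y′ ↦ y′(1 + η^δ(x, y′)) is strictly increasing on [0,1], with y-derivative at least h₀/2 at every y′ ∈ [0,1); (ii) F^δ is a bijection from the closed strip ℝ × [0,1] onto the closed fluid domain {(x, y) ∈ ℝ² : 0 ≤ y ≤ 1 + η(x)}, mapping ℝ × (0,1) onto {(x, y) : 0 < y < 1 + η(x)}. -/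

import Mathlib

open MeasureTheory Metric

lemma int_aux (K : SchwartzMap ℝ ℝ) {η : ℝ → ℝ} (hη : Continuous η) {B : ℝ}
    (hB : ∀ x, |η x| ≤ B) (c a : ℝ) :
    Integrable (fun s : ℝ => K s * η (c - a * s)) := by
  have h1 : Integrable (fun s : ℝ => η (c - a * s) * K s) :=
    (K.integrable (μ := volume)).bdd_mul
      ((hη.comp (by continuity)).aestronglyMeasurable)
      (Filter.Eventually.of_forall fun s => by simpa using hB _)
  exact h1.congr (Filter.Eventually.of_forall fun s => mul_comm _ _)

lemma int_aux2 (K : SchwartzMap ℝ ℝ) : Integrable (fun s : ℝ => |s| * |K s|) := by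
  have := K.integrable_pow_mul (μ := volume) 1
  simpa [Real.norm_eq_abs] using this

lemma diff_bound (K : SchwartzMap ℝ ℝ) {η : ℝ → ℝ} (hη : Continuous η) {B : ℝ}
    (hB : ∀ x, |η x| ≤ B) {l : ℝ} (hl0 : 0 ≤ l)
    (hl : ∀ a b, |η a - η b| ≤ l * |a - b|) (x a b : ℝ) :
    |(∫ s : ℝ, K s * η (x - a * s)) - ∫ s : ℝ, K s * η (x - b * s)|
      ≤ l * |a - b| * ∫ s : ℝ, |s| * |K s| := by
  rw [← integral_sub (int_aux K hη hB x a) (int_aux K hη hB x b)]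
  have key : ∀ s : ℝ, ‖K s * η (x - a * s) - K s * η (x - b * s)‖
      ≤ l * |a - b| * (|s| * |K s|) := by
    intro s
    have : K s * η (x - a * s) - K s * η (x - b * s)
        = K s * (η (x - a * s) - η (x - b * s)) := by ring
    rw [Real.norm_eq_abs, this, abs_mul]
    have h2 : |η (x - a * s) - η (x - b * s)| ≤ l * (|a - b| * |s|) := by
      have := hl (x - a * s) (x - b * s)
      calc |η (x - a * s) - η (x - b * s)| ≤ l * |(x - a*s) - (x - b*s)| := this
        _ = l * (|a - b| * |s|) := by
            rw [show (x - a*s) - (x - b*s) = (a - b) * (-s) by ring, abs_mul, abs_neg]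
    calc |K s| * |η (x - a * s) - η (x - b * s)| ≤ |K s| * (l * (|a - b| * |s|)) :=
          mul_le_mul_of_nonneg_left h2 (abs_nonneg _)
      _ = l * |a - b| * (|s| * |K s|) := by ring
  calc ‖∫ s : ℝ, (K s * η (x - a * s) - K s * η (x - b * s))‖
      ≤ ∫ s : ℝ, l * |a - b| * (|s| * |K s|) :=
        norm_integral_le_of_norm_le ((int_aux2 K).const_mul _) (Filter.Eventually.of_forall key)
    _ = l * |a - b| * ∫ s : ℝ, |s| * |K s| := integral_const_mul _ _

lemma decay3 (f : SchwartzMap ℝ ℝ) : ∃ M : ℝ, 0 ≤ M ∧ ∀ v : ℝ, (1 + v^2) * (|v| * |f v|) ≤ M := by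
  obtain ⟨C1, hC1, h1⟩ := f.decay 1 0
  obtain ⟨C3, hC3, h3⟩ := f.decay 3 0
  refine ⟨C1 + C3, by positivity, fun v => ?_⟩
  have e1 := h1 v
  have e3 := h3 v
  simp only [norm_iteratedFDeriv_zero, pow_one, Real.norm_eq_abs] at e1 e3
  have : (1 + v^2) * (|v| * |f v|) = |v| * |f v| + |v|^3 * |f v| := by
    rw [← sq_abs v]; ring
  rw [this]
  exact add_le_add e1 e3

lemma decay2 (f : SchwartzMap ℝ ℝ) : ∃ M : ℝ, 0 ≤ M ∧ ∀ v : ℝ, (1 + v^2) * |f v| ≤ M := by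
  obtain ⟨C0, hC0, h0⟩ := f.decay 0 0
  obtain ⟨C2, hC2, h2⟩ := f.decay 2 0
  refine ⟨C0 + C2, by positivity, fun v => ?_⟩
  have e0 := h0 v
  have e2 := h2 v
  simp only [norm_iteratedFDeriv_zero, pow_zero, pow_two, one_mul, Real.norm_eq_abs] at e0 e2
  have : (1 + v^2) * |f v| = |f v| + |v|^2 * |f v| := by rw [sq_abs]; ring
  rw [this, pow_two]
  exact add_le_add e0 (by rw [mul_assoc] at e2 ⊢; exact e2)

lemma one_add_sq_bound {b u t : ℝ} (hb : 0 < b) (ht0 : 0 < t) (htb : t ≤ b) :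
    ((1 : ℝ) + (u * t⁻¹)^2)⁻¹ ≤ max 1 (b^2) * (1 + u^2)⁻¹ := by
  have h1 : (1 + u^2) / max 1 (b^2) ≤ 1 + (u * t⁻¹)^2 := by
    rw [div_le_iff₀ (by positivity)]
    have hu : u^2 ≤ (u * t⁻¹)^2 * b^2 := by
      have : (u * t⁻¹)^2 * b^2 = u^2 * (b/t)^2 := by
        field_simp
      rw [this]
      have hbt : 1 ≤ (b/t)^2 := by
        have : 1 ≤ b / t := (one_le_div ht0).2 htb
        nlinarith
      nlinarith [sq_nonneg u]
    rcases le_total 1 (b^2) with h | h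
    · rw [max_eq_right h]; nlinarith [sq_nonneg (u*t⁻¹)]
    · rw [max_eq_left h]; nlinarith [sq_nonneg (u*t⁻¹), sq_nonneg u,
        mul_le_mul_of_nonneg_left h (sq_nonneg (u*t⁻¹))]
  calc ((1:ℝ) + (u * t⁻¹)^2)⁻¹ ≤ ((1 + u^2) / max 1 (b^2))⁻¹ :=
        inv_anti₀ (by positivity) h1
    _ = max 1 (b^2) * (1 + u^2)⁻¹ := by rw [inv_div]; ring

lemma hasDeriv_h (K : SchwartzMap ℝ ℝ) {η : ℝ → ℝ} (hη : Continuous η) {B : ℝ}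
    (hB : ∀ x, |η x| ≤ B) (x : ℝ) {ε₀ : ℝ} (hε : 0 < ε₀) :
    ∃ D : ℝ, HasDerivAt (fun ε => ∫ s : ℝ, K s * η (x - ε * s)) D ε₀ := by
  have hB0 : 0 ≤ B := (abs_nonneg _).trans (hB 0)
  obtain ⟨M, hM0, hM⟩ := decay2 K
  obtain ⟨M', hM'0, hM'⟩ := decay3 (SchwartzMap.derivCLM ℝ ℝ K)
  have hM'd : ∀ v : ℝ, (1 + v^2) * (|v| * |deriv K v|) ≤ M' := by
    intro v
    have := hM' v
    rwa [SchwartzMap.derivCLM_apply] at this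
  set a : ℝ := ε₀ / 2 with ha
  set b : ℝ := ε₀ + ε₀ / 2 with hb
  have ha0 : 0 < a := by rw [ha]; positivity
  have hb0 : 0 < b := by rw [hb]; positivity
  clear_value a b
  set F : ℝ → ℝ → ℝ := fun t u => t⁻¹ * K (u * t⁻¹) * η (x - u) with hF
  set F' : ℝ → ℝ → ℝ := fun t u =>
    ((-(t^2)⁻¹) * K (u * t⁻¹) + t⁻¹ * (deriv K (u * t⁻¹) * (u * -(t^2)⁻¹))) * η (x - u) with hF'
  have hKd : Differentiable ℝ K := (K.smooth 1).differentiable (by norm_num)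
  have hKd' : Continuous (deriv K) := (K.smooth 2).continuous_deriv one_le_two
  -- pointwise bound for F'
  have hball : ∀ t ∈ Metric.ball ε₀ a, a < t ∧ t ≤ b := by
    intro t ht
    rw [Metric.mem_ball, Real.dist_eq, abs_lt] at ht
    exact ⟨by linarith [ht.1], by linarith [ht.2]⟩
  set bound : ℝ → ℝ := fun u => B * (a⁻¹*a⁻¹ * (M + M') * max 1 (b^2)) * (1 + u^2)⁻¹ with hbd
  have h_bound : ∀ u : ℝ, ∀ t ∈ Metric.ball ε₀ a, ‖F' t u‖ ≤ bound u := by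
    intro u t ht
    obtain ⟨hta, htb⟩ := hball t ht
    have ht0 : 0 < t := ha0.trans hta
    set v := u * t⁻¹ with hv
    have h1 : |F' t u| ≤ ((t^2)⁻¹ * |K v| + (t^2)⁻¹ * (|v| * |deriv K v|)) * B := by
      rw [hF']
      simp only [abs_mul]
      have e : |(-(t^2)⁻¹) * K v + t⁻¹ * (deriv K v * (u * -(t^2)⁻¹))|
          ≤ (t^2)⁻¹ * |K v| + (t^2)⁻¹ * (|v| * |deriv K v|) := by
        refine (abs_add_le _ _).trans ?_
        have e1 : |(-(t^2)⁻¹) * K v| = (t^2)⁻¹ * |K v| := by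
          rw [abs_mul, abs_neg, abs_inv, abs_of_nonneg (sq_nonneg t)]
        have e2 : |t⁻¹ * (deriv K v * (u * -(t^2)⁻¹))| = (t^2)⁻¹ * (|v| * |deriv K v|) := by
          rw [abs_mul, abs_mul, abs_mul, abs_neg, abs_inv, abs_inv,
            abs_of_nonneg (sq_nonneg t), hv, abs_mul, abs_inv]
          rw [abs_of_pos ht0]
          field_simp
        rw [e1, e2]
      exact mul_le_mul e (hB _) (abs_nonneg _) (by positivity)
    have hp : (0:ℝ) < 1 + v^2 := by positivity
    have ht2 : (t^2)⁻¹ ≤ a⁻¹ * a⁻¹ := by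
      rw [← mul_inv]
      exact inv_anti₀ (by positivity) (by nlinarith)
    have hKv : |K v| ≤ M * (1 + v^2)⁻¹ := by
      rw [← div_eq_mul_inv, le_div_iff₀ hp, mul_comm]
      exact hM v
    have hKv' : |v| * |deriv K v| ≤ M' * (1 + v^2)⁻¹ := by
      rw [← div_eq_mul_inv, le_div_iff₀ hp, mul_comm]
      exact hM'd v
    have hsq : ((1:ℝ) + v^2)⁻¹ ≤ max 1 (b^2) * (1 + u^2)⁻¹ :=
      one_add_sq_bound hb0 ht0 htb
    calc ‖F' t u‖ ≤ ((t^2)⁻¹ * |K v| + (t^2)⁻¹ * (|v| * |deriv K v|)) * B := h1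
      _ ≤ (a⁻¹*a⁻¹ * (M * (1 + v^2)⁻¹) + a⁻¹*a⁻¹ * (M' * (1 + v^2)⁻¹)) * B := by
          have hiv : (0:ℝ) ≤ (t^2)⁻¹ := by positivity
          refine mul_le_mul_of_nonneg_right (add_le_add ?_ ?_) hB0
          · exact mul_le_mul ht2 hKv (abs_nonneg _) (by positivity)
          · exact mul_le_mul ht2 hKv' (by positivity) (by positivity)
      _ = B * (a⁻¹*a⁻¹ * (M + M')) * (1 + v^2)⁻¹ := by ring
      _ ≤ B * (a⁻¹*a⁻¹ * (M + M')) * (max 1 (b^2) * (1 + u^2)⁻¹) := by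
          refine mul_le_mul_of_nonneg_left hsq (by positivity)
      _ = bound u := by rw [hbd]; ring
  have hb_int : Integrable bound := by
    rw [hbd]
    exact integrable_inv_one_add_sq.const_mul _
  have hF_meas : ∀ᶠ t in nhds ε₀, AEStronglyMeasurable (F t) volume := by
    refine Filter.Eventually.of_forall fun t => Continuous.aestronglyMeasurable ?_
    rw [hF]
    exact ((continuous_const.mul (K.continuous.comp
      (continuous_id.mul continuous_const))).mul (hη.comp (continuous_const.sub continuous_id)))
  have hF'_meas : AEStronglyMeasurable (F' ε₀) volume := by
    refine Continuous.aestronglyMeasurable ?_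
    rw [hF']
    refine Continuous.mul ?_ (hη.comp (continuous_const.sub continuous_id))
    refine Continuous.add (continuous_const.mul (K.continuous.comp
      (continuous_id.mul continuous_const))) ?_
    exact continuous_const.mul ((hKd'.comp (continuous_id.mul continuous_const)).mul
      (continuous_id.mul continuous_const))
  have hεb : ε₀ ≤ b := by rw [hb]; linarith
  have hF_int : Integrable (F ε₀) := by
    refine Integrable.mono' ((integrable_inv_one_add_sq.const_mul
      (a⁻¹ * M * max 1 (b^2) * B))) ?_ (Filter.Eventually.of_forall fun u => ?_)
    · exact hF_meas.self_of_nhds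
    · set v := u * ε₀⁻¹ with hv
      have hp : (0:ℝ) < 1 + v^2 := by positivity
      have hKv : |K v| ≤ M * (1 + v^2)⁻¹ := by
        rw [← div_eq_mul_inv, le_div_iff₀ hp, mul_comm]
        exact hM v
      have hsq : ((1:ℝ) + v^2)⁻¹ ≤ max 1 (b^2) * (1 + u^2)⁻¹ :=
        one_add_sq_bound hb0 hε hεb
      have hεa : ε₀⁻¹ ≤ a⁻¹ := by
        refine inv_anti₀ ha0 ?_
        rw [ha]; linarith
      have : ‖F ε₀ u‖ = ε₀⁻¹ * |K v| * |η (x - u)| := by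
        rw [hF]
        simp only [Real.norm_eq_abs, abs_mul]
        rw [abs_of_pos (inv_pos.2 hε)]
      rw [this]
      calc ε₀⁻¹ * |K v| * |η (x - u)| ≤ a⁻¹ * (M * (1 + v^2)⁻¹) * B := by
            refine mul_le_mul (mul_le_mul hεa hKv (abs_nonneg _) (by positivity)) (hB _)
              (abs_nonneg _) (by positivity)
        _ ≤ a⁻¹ * (M * (max 1 (b^2) * (1 + u^2)⁻¹)) * B := by
            refine mul_le_mul_of_nonneg_right (mul_le_mul_of_nonneg_left
              (mul_le_mul_of_nonneg_left hsq hM0) (by positivity)) hB0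
        _ = a⁻¹ * M * max 1 (b^2) * B * (1 + u^2)⁻¹ := by ring
  have h_diff : ∀ u : ℝ, ∀ t ∈ Metric.ball ε₀ a, HasDerivAt (F · u) (F' t u) t := by
    intro u t ht
    have ht0 : 0 < t := ha0.trans (hball t ht).1
    have h1 : HasDerivAt (fun t : ℝ => t⁻¹) (-(t^2)⁻¹) t := hasDerivAt_inv ht0.ne'
    have h2 : HasDerivAt (fun t : ℝ => u * t⁻¹) (u * -(t^2)⁻¹) t := h1.const_mul u
    have h3 : HasDerivAt K (deriv K (u * t⁻¹)) (u * t⁻¹) := (hKd (u * t⁻¹)).hasDerivAt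
    have h4 : HasDerivAt (fun t : ℝ => K (u * t⁻¹))
        (deriv K (u * t⁻¹) * (u * -(t^2)⁻¹)) t := h3.comp t h2
    have h6 := (h1.mul h4).mul_const (η (x - u))
    exact h6
  have main := hasDerivAt_integral_of_dominated_loc_of_deriv_le (μ := volume)
    (F := F) (F' := F') (bound := bound) (Metric.ball_mem_nhds ε₀ ha0) hF_meas hF_int hF'_meas
    (Filter.Eventually.of_forall h_bound) hb_int (Filter.Eventually.of_forall h_diff)
  refine ⟨∫ u : ℝ, F' ε₀ u, HasDerivAt.congr_of_eventuallyEq main.2 ?_⟩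
  filter_upwards [isOpen_Ioi.mem_nhds hε] with t ht
  have ht0 : 0 < t := ht
  have step1 : (fun s : ℝ => K s * η (x - t * s))
      = fun s : ℝ => (fun u : ℝ => K (u * t⁻¹) * η (x - u)) (t * s) := by
    funext s
    simp only []
    rw [show t * s * t⁻¹ = s by field_simp]
  calc (∫ s : ℝ, K s * η (x - t * s))
      = ∫ s : ℝ, (fun u : ℝ => K (u * t⁻¹) * η (x - u)) (t * s) := by rw [← step1]
    _ = |t⁻¹| • ∫ u : ℝ, K (u * t⁻¹) * η (x - u) :=
        MeasureTheory.Measure.integral_comp_mul_left (fun u : ℝ => K (u * t⁻¹) * η (x - u)) t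
    _ = ∫ u : ℝ, t⁻¹ * (K (u * t⁻¹) * η (x - u)) := by
        rw [smul_eq_mul, abs_of_pos (inv_pos.2 ht0), ← integral_const_mul]
    _ = ∫ u : ℝ, F t u := by
        refine integral_congr_ae (Filter.Eventually.of_forall fun u => ?_)
        simp only [hF]
        ring

lemma deriv_le_lip {f : ℝ → ℝ} {D c x : ℝ}
    (hf : HasDerivAt f D x) (hl : ∀ a b, |f a - f b| ≤ c * |a - b|) : |D| ≤ c := by
  have h := hasDerivAt_iff_tendsto_slope.1 hf
  have h2 : Filter.Tendsto (fun y => |slope f x y|) (nhdsWithin x {x}ᶜ) (nhds |D|) := h.abs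
  refine le_of_tendsto h2 ?_
  filter_upwards [self_mem_nhdsWithin] with y hy
  have hyx : y - x ≠ 0 := sub_ne_zero.2 hy
  rw [slope_def_field, div_eq_mul_inv, abs_mul, abs_inv, ← div_eq_mul_inv,
    div_le_iff₀ (abs_pos.2 hyx)]
  exact hl y x
theorem stmt12 (h₀ : ℝ) (hh₀ : h₀ ∈ Set.Ioo (0 : ℝ) 1)
    (η : ℝ → ℝ) (L : NNReal) (hLip : LipschitzWith L η)
    (B : ℝ) (hB : ∀ x, |η x| ≤ B)
    (hinf : h₀ < 1 + ⨅ x : ℝ, η x)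
    (K : SchwartzMap ℝ ℝ) (hK : (∫ s : ℝ, K s) = 1)
    (ηδ : ℝ → ℝ → ℝ → ℝ)
    (hηδ : ∀ δ x y, ηδ δ x y = ∫ s : ℝ, K s * η (x - δ * (1 - y) * s))
    (Fδ : ℝ → ℝ × ℝ → ℝ × ℝ)
    (hFδ : ∀ δ p, Fδ δ p = (p.1, p.2 * (1 + ηδ δ p.1 p.2))) :
    ∃ δmax : ℝ, 0 < δmax ∧ ∀ δ : ℝ, 0 < δ → δ < δmax →
      (∀ x : ℝ, StrictMonoOn (fun y => y * (1 + ηδ δ x y)) (Set.Icc 0 1) ∧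
        ∀ y ∈ Set.Ico (0 : ℝ) 1,
          ∃ D : ℝ, HasDerivAt (fun y' => y' * (1 + ηδ δ x y')) D y ∧ h₀ / 2 ≤ D) ∧
      Set.BijOn (Fδ δ) (Set.univ ×ˢ Set.Icc (0 : ℝ) 1)
        {p : ℝ × ℝ | 0 ≤ p.2 ∧ p.2 ≤ 1 + η p.1} ∧
      Fδ δ '' (Set.univ ×ˢ Set.Ioo (0 : ℝ) 1) =
        {p : ℝ × ℝ | 0 < p.2 ∧ p.2 < 1 + η p.1} := by
  obtain ⟨hh₀0, hh₀1⟩ := hh₀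
  have hη : Continuous η := hLip.continuous
  have hl : ∀ a b, |η a - η b| ≤ (L : ℝ) * |a - b| := by
    intro a b
    have := hLip.dist_le_mul a b
    rwa [Real.dist_eq, Real.dist_eq] at this
  set C : ℝ := ∫ s : ℝ, |s| * |K s| with hC
  have hC0 : 0 ≤ C := integral_nonneg fun s => by positivity
  have hL0 : (0:ℝ) ≤ L := L.coe_nonneg
  set I : ℝ := ⨅ x : ℝ, η x with hI
  have hbdd : BddBelow (Set.range η) := by
    refine ⟨-B, ?_⟩
    rintro _ ⟨x, rfl⟩
    linarith [(abs_le.1 (hB x)).1]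
  have hIle : ∀ x, I ≤ η x := fun x => ciInf_le hbdd x
  set m : ℝ := 1 + I - h₀ with hm
  have hm0 : 0 < m := by rw [hm]; linarith
  set δmax : ℝ := min m (h₀/2) / ((L : ℝ) * C + 1) with hδmax
  have hden : (0:ℝ) < (L : ℝ) * C + 1 := by positivity
  refine ⟨δmax, by rw [hδmax]; positivity, fun δ hδ0 hδ1 => ?_⟩
  have hkey : δ * ((L:ℝ) * C) < min m (h₀/2) := by
    have h1 : δ * ((L:ℝ) * C + 1) < min m (h₀/2) := by
      rw [hδmax, lt_div_iff₀ hden] at hδ1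
      exact hδ1
    nlinarith
  have hkm : δ * ((L:ℝ) * C) < m := hkey.trans_le (min_le_left _ _)
  have hkh : δ * ((L:ℝ) * C) < h₀ / 2 := hkey.trans_le (min_le_right _ _)
  -- η x as integral with a = 0
  have hconst : ∀ x a : ℝ, a = 0 → (∫ s : ℝ, K s * η (x - a * s)) = η x := by
    intro x a ha
    subst ha
    simp only [zero_mul, sub_zero]
    rw [integral_mul_const, hK, one_mul]
  -- Lipschitz-in-y estimate
  have E1 : ∀ x y₁ y₂ : ℝ, |ηδ δ x y₁ - ηδ δ x y₂| ≤ (L:ℝ) * C * δ * |y₁ - y₂| := by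
    intro x y₁ y₂
    rw [hηδ, hηδ]
    have := diff_bound K hη hB hL0 hl x (δ * (1 - y₁)) (δ * (1 - y₂))
    calc |(∫ s : ℝ, K s * η (x - δ * (1 - y₁) * s)) - ∫ s : ℝ, K s * η (x - δ * (1 - y₂) * s)|
        ≤ (L:ℝ) * |δ * (1 - y₁) - δ * (1 - y₂)| * C := this
      _ = (L:ℝ) * C * δ * |y₁ - y₂| := by
          rw [show δ * (1 - y₁) - δ * (1 - y₂) = δ * (y₂ - y₁) by ring, abs_mul,
            abs_of_pos hδ0, abs_sub_comm]
          ring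
  -- closeness to η
  have E2 : ∀ x : ℝ, ∀ y ∈ Set.Icc (0:ℝ) 1, |ηδ δ x y - η x| ≤ (L:ℝ) * C * δ := by
    intro x y hy
    rw [hηδ, ← hconst x 0 rfl]
    have := diff_bound K hη hB hL0 hl x (δ * (1 - y)) 0
    calc |(∫ s : ℝ, K s * η (x - δ * (1 - y) * s)) - ∫ s : ℝ, K s * η (x - 0 * s)|
        ≤ (L:ℝ) * |δ * (1 - y) - 0| * C := this
      _ ≤ (L:ℝ) * C * δ := by
          rw [sub_zero, abs_mul, abs_of_pos hδ0, abs_of_nonneg (by linarith [hy.2] : (0:ℝ) ≤ 1 - y)]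
          nlinarith [mul_nonneg (mul_nonneg (mul_nonneg hL0 hC0) hδ0.le) hy.1]
  -- lower bound for 1 + ηδ
  have Elow : ∀ x : ℝ, ∀ y ∈ Set.Icc (0:ℝ) 1, h₀ + (m - δ * ((L:ℝ) * C)) ≤ 1 + ηδ δ x y := by
    intro x y hy
    have h1 := (abs_le.1 (E2 x y hy)).1
    have h2 := hIle x
    rw [hm]
    nlinarith
  -- strict monotonicity
  have mono : ∀ x : ℝ, StrictMonoOn (fun y => y * (1 + ηδ δ x y)) (Set.Icc 0 1) := by
    intro x y₁ hy₁ y₂ hy₂ hlt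
    simp only []
    have hpos : (0:ℝ) < y₂ - y₁ := sub_pos.2 hlt
    have habs : |y₁ - y₂| = y₂ - y₁ := by rw [abs_sub_comm, abs_of_pos hpos]
    have hA := (abs_le.1 (E1 x y₁ y₂)).2
    rw [habs] at hA
    have hlow := Elow x y₂ hy₂
    have t1 : (y₂ - y₁) * h₀ ≤ (y₂ - y₁) * (1 + ηδ δ x y₂) :=
      mul_le_mul_of_nonneg_left (by linarith) (by linarith)
    have t3 : y₁ * (-((L:ℝ) * C * δ * (y₂ - y₁))) ≤ y₁ * (ηδ δ x y₂ - ηδ δ x y₁) :=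
      mul_le_mul_of_nonneg_left (by linarith) hy₁.1
    have t4 : y₁ * ((L:ℝ) * C * δ * (y₂ - y₁)) ≤ 1 * ((L:ℝ) * C * δ * (y₂ - y₁)) :=
      mul_le_mul_of_nonneg_right hy₁.2 (by positivity)
    have t5 : (y₂ - y₁) * (δ * ((L:ℝ) * C)) < (y₂ - y₁) * (h₀ / 2) :=
      mul_lt_mul_of_pos_left hkh hpos
    nlinarith [t1, t3, t4, t5]
  -- continuity in y
  have contg : ∀ x : ℝ, Continuous (fun y => y * (1 + ηδ δ x y)) := by
    intro x
    have c1 : Continuous (fun y => ηδ δ x y) := by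
      have hlip2 : LipschitzWith (Real.nnabs ((L:ℝ) * C * δ)) (fun y => ηδ δ x y) := by
        apply LipschitzWith.of_dist_le_mul
        intro a b
        rw [Real.dist_eq, Real.dist_eq, Real.coe_nnabs]
        calc |ηδ δ x a - ηδ δ x b| ≤ (L:ℝ) * C * δ * |a - b| := E1 x a b
          _ ≤ |(L:ℝ) * C * δ| * |a - b| :=
            mul_le_mul_of_nonneg_right (le_abs_self _) (abs_nonneg _)
      exact hlip2.continuous
    exact continuous_id.mul (continuous_const.add c1)
  -- endpoint values
  have hg1 : ∀ x : ℝ, ηδ δ x 1 = η x := by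
    intro x
    rw [hηδ]
    exact hconst x (δ * (1 - 1)) (by ring)
  have hηpos : ∀ x : ℝ, 0 < 1 + η x := by
    intro x
    have := hIle x
    rw [hm] at hm0
    linarith
  -- derivative claim
  have deriv : ∀ x : ℝ, ∀ y ∈ Set.Ico (0:ℝ) 1,
      ∃ D : ℝ, HasDerivAt (fun y' => y' * (1 + ηδ δ x y')) D y ∧ h₀ / 2 ≤ D := by
    intro x y hy
    have hε : 0 < δ * (1 - y) := mul_pos hδ0 (by linarith [hy.2])
    obtain ⟨D₀, hD₀⟩ := hasDeriv_h K hη hB x hε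
    have hD₀le : |D₀| ≤ (L:ℝ) * C := by
      refine deriv_le_lip hD₀ ?_
      intro a b
      calc |(∫ s : ℝ, K s * η (x - a * s)) - ∫ s : ℝ, K s * η (x - b * s)|
          ≤ (L:ℝ) * |a - b| * C := diff_bound K hη hB hL0 hl x a b
        _ = (L:ℝ) * C * |a - b| := by ring
    have inner : HasDerivAt (fun y' : ℝ => δ * (1 - y')) (-δ) y := by
      have h1 : HasDerivAt (fun y' : ℝ => 1 - y') (-1) y := (hasDerivAt_id y).const_sub 1
      have h2 := h1.const_mul δ
      rw [show -δ = δ * -1 by ring]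
      exact h2
    have comp : HasDerivAt (fun y' => ∫ s : ℝ, K s * η (x - δ * (1 - y') * s))
        (D₀ * (-δ)) y := by have := hD₀.comp y inner; exact this
    have hηd : HasDerivAt (fun y' => ηδ δ x y') (D₀ * (-δ)) y := by
      have hfe : (fun y' => ηδ δ x y')
          = fun y' => ∫ s : ℝ, K s * η (x - δ * (1 - y') * s) :=
        funext fun y' => hηδ δ x y'
      rw [hfe]
      exact comp
    have hgd : HasDerivAt (fun y' => y' * (1 + ηδ δ x y'))
        (1 * (1 + ηδ δ x y) + y * (0 + D₀ * (-δ))) y :=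
      (hasDerivAt_id y).mul ((hasDerivAt_const y 1).add hηd)
    refine ⟨_, hgd, ?_⟩
    have hlow := Elow x y ⟨hy.1, hy.2.le⟩
    have habs : |y * (D₀ * -δ)| ≤ (L:ℝ) * C * δ := by
      rw [abs_mul, abs_mul, abs_neg, abs_of_pos hδ0, abs_of_nonneg hy.1]
      calc y * (|D₀| * δ) ≤ 1 * (((L:ℝ) * C) * δ) := by
            nlinarith [hy.2, hD₀le, abs_nonneg D₀]
        _ = (L:ℝ) * C * δ := by ring
    have h2 := (abs_le.1 habs).1
    nlinarith [h2, hlow, hkm, hkh]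
  refine ⟨fun x => ⟨mono x, deriv x⟩, ⟨?_, ?_, ?_⟩, ?_⟩
  -- MapsTo
  · rintro ⟨x, y⟩ hp
    have hy : y ∈ Set.Icc (0:ℝ) 1 := (Set.mem_prod.1 hp).2
    rw [hFδ]
    constructor
    · have h1 := (mono x).monotoneOn (Set.left_mem_Icc.2 zero_le_one) hy hy.1
      simpa using h1
    · have h1 := (mono x).monotoneOn hy (Set.right_mem_Icc.2 zero_le_one) hy.2
      simp only [one_mul, hg1 x] at h1
      simpa using h1
  -- InjOn
  · rintro ⟨x₁, y₁⟩ h₁ ⟨x₂, y₂⟩ h₂ heq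
    rw [hFδ, hFδ] at heq
    simp only [Prod.mk.injEq] at heq
    obtain ⟨hx, hyy⟩ := heq
    subst hx
    have h3 := (mono x₁).injOn (Set.mem_prod.1 h₁).2 (Set.mem_prod.1 h₂).2 hyy
    exact congrArg (Prod.mk x₁) h3
  -- SurjOn
  · rintro ⟨x, y⟩ ⟨hy0, hy1⟩
    have hIVT := intermediate_value_Icc (zero_le_one (α := ℝ)) (contg x).continuousOn
    have hyin : y ∈ Set.Icc ((fun y => y * (1 + ηδ δ x y)) 0) ((fun y => y * (1 + ηδ δ x y)) 1) := by
      simp only [zero_mul, one_mul, hg1 x]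
      exact ⟨hy0, hy1⟩
    obtain ⟨y', hy', hgy'⟩ := hIVT hyin
    simp only at hgy'
    refine ⟨(x, y'), Set.mem_prod.2 ⟨trivial, hy'⟩, ?_⟩
    rw [hFδ]
    simp only
    rw [hgy']
  -- image of open strip
  · ext ⟨x, y⟩
    constructor
    · rintro ⟨⟨x', y'⟩, hp, heq⟩
      have hy' : y' ∈ Set.Ioo (0:ℝ) 1 := (Set.mem_prod.1 hp).2
      rw [hFδ] at heq
      simp only at heq
      rw [← heq]
      have hy'I : y' ∈ Set.Icc (0:ℝ) 1 := ⟨hy'.1.le, hy'.2.le⟩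
      constructor
      · have h1 := (mono x') (Set.left_mem_Icc.2 zero_le_one) hy'I hy'.1
        simpa using h1
      · have h1 := (mono x') hy'I (Set.right_mem_Icc.2 zero_le_one) hy'.2
        simp only [one_mul, hg1 x'] at h1
        simpa using h1
    · rintro ⟨hy0, hy1⟩
      have hIVT := intermediate_value_Icc (zero_le_one (α := ℝ)) (contg x).continuousOn
      have hyin : y ∈ Set.Icc ((fun y => y * (1 + ηδ δ x y)) 0)
          ((fun y => y * (1 + ηδ δ x y)) 1) := by
        simp only [zero_mul, one_mul, hg1 x]
        exact ⟨hy0.le, hy1.le⟩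
      obtain ⟨y', hy', hgy'⟩ := hIVT hyin
      simp only at hgy'
      have hne0 : y' ≠ 0 := by
        intro h
        rw [h] at hgy'
        simp at hgy'
        rw [← hgy'] at hy0
        exact lt_irrefl _ hy0
      have hne1 : y' ≠ 1 := by
        intro h
        rw [h] at hgy'
        simp only [one_mul, hg1 x] at hgy'
        rw [← hgy'] at hy1
        exact lt_irrefl _ hy1
      refine ⟨(x, y'), Set.mem_prod.2 ⟨trivial, ⟨lt_of_le_of_ne hy'.1 (Ne.symm hne0),
        lt_of_le_of_ne hy'.2 hne1⟩⟩, ?_⟩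
      rw [hFδ]
      simp only
      rw [hgy']
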